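/- arXiv:2502.18797 — 3 statements merged into one kernel-verified Lean document; each statement's English description precedes it below -/
import Mathlib

section
/- Let G be a connected plane graph with minimum degree at least 3 that contains no cycle of length 4, no cycle of length 7, no cycle of length 9, and no 5-cycle normally adjacent to a 3-cycle. Then the boundary walk of every 9-face of G consists either of one 3-cycle and one 6-cycle, or of three 3-cycles. -/
namespace Paper

open SimpleGraph

variable {V : Type*}

/-- The fixed-point-free involution on darts reversing each dart. -/
def dartFlip (G : SimpleGraph V) : Equiv.Perm G.Dart :=
  ⟨SimpleGraph.Dart.symm, SimpleGraph.Dart.symm,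
    fun d => SimpleGraph.Dart.symm_symm d, fun d => SimpleGraph.Dart.symm_symm d⟩

/-- A combinatorial embedding (rotation system) of a simple graph: a permutation of the
darts whose cycles are exactly the sets of darts emanating from a common vertex. -/
structure PlaneEmbedding (G : SimpleGraph V) where
  rot : Equiv.Perm G.Dart
  fst_rot : ∀ d : G.Dart, (rot d).fst = d.fst
  rot_cyclic : ∀ d e : G.Dart, d.fst = e.fst → rot.SameCycle d e

/-- The face permutation of a combinatorial embedding; its orbits are the (boundary walks
of the) faces of the embedding. -/
def PlaneEmbedding.facePerm {G : SimpleGraph V} (E : PlaneEmbedding G) : Equiv.Perm G.Dart :=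
  E.rot * dartFlip G

/-- The face (as its set of boundary darts, i.e. the orbit of the face permutation)
containing a given dart. -/
def faceOf {G : SimpleGraph V} (E : PlaneEmbedding G) (d : G.Dart) : Set G.Dart :=
  {e | E.facePerm.SameCycle d e}

/-- The length of the boundary walk of the face containing a given dart; a `k`-face is a
face whose boundary walk has length `k`, i.e. whose dart-orbit has size `k`. -/
noncomputable def faceSize {G : SimpleGraph V} (E : PlaneEmbedding G) (d : G.Dart) : ℕ :=
  (faceOf E d).ncard

/-- The number of faces of the embedding lying in a given connected component. -/
noncomputable def componentFaceCount {G : SimpleGraph V} (E : PlaneEmbedding G)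
    (c : G.ConnectedComponent) : ℕ :=
  Nat.card (Quotient (Setoid.comap
    (Subtype.val : {d : G.Dart // G.connectedComponentMk d.fst = c} → G.Dart)
    (Equiv.Perm.SameCycle.setoid E.facePerm)))

/-- The embedding is plane (genus zero): Euler's formula `V - E + F = 2` holds on each
connected component containing an edge (stated as `2V + 2F = #darts + 4`, using that the
number of darts is twice the number of edges). -/
def PlaneEmbedding.IsPlane {G : SimpleGraph V} (E : PlaneEmbedding G) : Prop :=
  ∀ c : G.ConnectedComponent, (∃ d : G.Dart, G.connectedComponentMk d.fst = c) →
    2 * {v : V | G.connectedComponentMk v = c}.ncard + 2 * componentFaceCount E c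
      = {d : G.Dart | G.connectedComponentMk d.fst = c}.ncard + 4

/-- `G` is a planar graph: it admits a plane (genus-zero) combinatorial embedding. -/
def IsPlanar (G : SimpleGraph V) : Prop :=
  ∃ E : PlaneEmbedding G, E.IsPlane

/-- `G` has no cycle of length `n`. -/
def NoCycleLen (G : SimpleGraph V) (n : ℕ) : Prop :=
  ∀ (v : V) (c : G.Walk v v), c.IsCycle → c.length ≠ n

/-- Two cycles (given as closed walks) are normally adjacent: their intersection is
isomorphic to `K₂`, i.e. they share exactly one edge together with its two endpoints. -/
def NormAdjWalks (G : SimpleGraph V) {a b : V} (c₁ : G.Walk a a) (c₂ : G.Walk b b) : Prop :=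
  ∃ x y : V, x ≠ y ∧ s(x, y) ∈ c₁.edges ∧ s(x, y) ∈ c₂.edges ∧
    (∀ z : V, (z ∈ c₁.support ∧ z ∈ c₂.support) ↔ (z = x ∨ z = y))

/-- `G` has no `5`-cycle normally adjacent to a `3`-cycle. -/
def No5CycleNormAdj3 (G : SimpleGraph V) : Prop :=
  ∀ (a b : V) (c₁ : G.Walk a a) (c₂ : G.Walk b b),
    c₁.IsCycle → c₁.length = 5 → c₂.IsCycle → c₂.length = 3 →
      ¬ NormAdjWalks G c₁ c₂

/-- `d` lists the boundary darts of a face in order, and this boundary is the closed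
walk `v 0, v 1, …, v (n-1), v 0`. -/
def FaceTraversal {G : SimpleGraph V} (E : PlaneEmbedding G) {n : ℕ}
    (v : ZMod n → V) (d : ZMod n → G.Dart) : Prop :=
  (∀ i, (d i).toProd = (v i, v (i + 1))) ∧ ∀ i, E.facePerm (d i) = d (i + 1)

/-- The cycle `v 0, v 1, …, v (n-1), v 0` (with distinct vertices) bounds a face of the
embedding (traversed in one of the two possible directions). -/
def CycleBoundsFace {G : SimpleGraph V} (E : PlaneEmbedding G) {n : ℕ}
    (v : ZMod n → V) : Prop :=
  Function.Injective v ∧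
    ((∃ d, FaceTraversal E v d) ∨ (∃ d, FaceTraversal E (fun i => v (-i)) d))

/-- The `i`-th vertex of the boundary walk of the face containing the dart `d0`. -/
def boundaryVert {G : SimpleGraph V} (E : PlaneEmbedding G) (d0 : G.Dart) (i : ℕ) : V :=
  ((E.facePerm ^ i) d0).fst

/-- The faces containing the darts `d1`, `d2` are adjacent: their boundaries share at
least one edge. -/
def FacesAdjacent {G : SimpleGraph V} (E : PlaneEmbedding G) (d1 d2 : G.Dart) : Prop :=
  ∃ e1 e2 : G.Dart, E.facePerm.SameCycle d1 e1 ∧ E.facePerm.SameCycle d2 e2 ∧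
    e1.edge = e2.edge

/-- The set of vertices on the boundary of the face containing the dart `d`. -/
def faceVerts {G : SimpleGraph V} (E : PlaneEmbedding G) (d : G.Dart) : Set V :=
  {x | ∃ e : G.Dart, E.facePerm.SameCycle d e ∧ e.fst = x}

/-- The set of edges on the boundary of the face containing the dart `d`. -/
def faceEdges {G : SimpleGraph V} (E : PlaneEmbedding G) (d : G.Dart) : Set (Sym2 V) :=
  {s | ∃ e : G.Dart, E.facePerm.SameCycle d e ∧ e.edge = s}

section Configs

variable [Fintype V]

/-- Configuration (1): a `10`-cycle bounding a face together with a `3`-cycle bounding a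
face, normally adjacent to it along one edge, all eleven vertices having degree `3`. -/
def Config1 (G : SimpleGraph V) [DecidableRel G.Adj] (E : PlaneEmbedding G) : Prop :=
  ∃ (v : ZMod 10 → V) (w : ZMod 3 → V) (u : V),
    CycleBoundsFace E v ∧ CycleBoundsFace E w ∧
    ({w 0, w 1, w 2} : Set V) = {v 0, v 1, u} ∧ u ∉ Set.range v ∧
    (∀ i, G.degree (v i) = 3) ∧ G.degree u = 3

/-- Configuration (2): two vertex-disjoint `10`-cycles `x₁…x₁₀` and `y₁…y₁₀` (indexed here
from `0`), each bounding a face, with edges `x₃y₃` and `x₁₀y₁₀`; all `xᵢ` have degree `3`,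
`y₃` and `y₁₀` have degree `4`, the other `yᵢ` have degree `3`. -/
def Config2 (G : SimpleGraph V) [DecidableRel G.Adj] (E : PlaneEmbedding G) : Prop :=
  ∃ x y : ZMod 10 → V,
    CycleBoundsFace E x ∧ CycleBoundsFace E y ∧
    Set.range x ∩ Set.range y = ∅ ∧
    G.Adj (x 2) (y 2) ∧ G.Adj (x 9) (y 9) ∧
    (∀ i, G.degree (x i) = 3) ∧
    G.degree (y 2) = 4 ∧ G.degree (y 9) = 4 ∧
    (∀ i, i ≠ 2 → i ≠ 9 → G.degree (y i) = 3)

/-- Configuration (3): an `8`-cycle bounding a face and a `5`-cycle bounding a face that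
are normally adjacent (sharing exactly one edge and its endpoints), all eleven vertices
having degree `3`. -/
def Config3 (G : SimpleGraph V) [DecidableRel G.Adj] (E : PlaneEmbedding G) : Prop :=
  ∃ (a : ZMod 8 → V) (b : ZMod 5 → V),
    CycleBoundsFace E a ∧ CycleBoundsFace E b ∧
    Set.range a ∩ Set.range b = {a 0, a 1} ∧
    (∃ j : ZMod 5, (b j = a 0 ∧ b (j + 1) = a 1) ∨ (b j = a 1 ∧ b (j + 1) = a 0)) ∧
    (∀ i, G.degree (a i) = 3) ∧ (∀ j, G.degree (b j) = 3)

end Configs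

open Classical in
/-- The function resulting from the operation `Delete_[u](G, f)`: every neighbour of `u`
loses one unit. -/
noncomputable def deleteFun (G : SimpleGraph V) (u : V) (f : V → ℤ) : V → ℤ :=
  fun v => if G.Adj u v then f v - 1 else f v

open Classical in
/-- The function resulting from the operation `DeleteSave_[u; w](G, f)`: every neighbour
of `u` except `w` loses one unit. -/
noncomputable def deleteSaveFun (G : SimpleGraph V) (u w : V) (f : V → ℤ) : V → ℤ :=
  fun v => if G.Adj u v ∧ v ≠ w then f v - 1 else f v

/-- All vertices of the subgraph of `G` induced on `S` can be removed by a sequence of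
legal applications of the `Delete` and `DeleteSave` operations, starting from the value
function `f`. -/
inductive WeaklyReducible (G : SimpleGraph V) : Set V → (V → ℤ) → Prop
  | empty (f : V → ℤ) : WeaklyReducible G ∅ f
  | delete (S : Set V) (f : V → ℤ) (u : V) (hu : u ∈ S)
      (hnn : ∀ v ∈ S \ {u}, 0 ≤ deleteFun G u f v)
      (h : WeaklyReducible G (S \ {u}) (deleteFun G u f)) : WeaklyReducible G S f
  | deleteSave (S : Set V) (f : V → ℤ) (u w : V) (hu : u ∈ S) (hw : w ∈ S \ {u})
      (hadj : G.Adj u w) (hlt : f w < f u)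
      (hnn : ∀ v ∈ S \ {u}, 0 ≤ deleteSaveFun G u w f v)
      (h : WeaklyReducible G (S \ {u}) (deleteSaveFun G u w f)) : WeaklyReducible G S f

/-- `G` is weakly `d`-degenerate: all its vertices can be removed by a sequence of legal
applications of the `Delete` and `DeleteSave` operations, starting from the constant
function of value `d`. -/
def WeaklyDegenerate (G : SimpleGraph V) (d : ℤ) : Prop :=
  WeaklyReducible G Set.univ (fun _ => d)

/-- The canonical cover of `G` with `s = 2`: two disjoint copies of `G`, on vertex set
`V × Fin 2`, with `(u, i)` adjacent to `(v, j)` iff `uv ∈ E(G)` and `i = j`. -/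
def canonicalCover2 (G : SimpleGraph V) : SimpleGraph (V × Fin 2) where
  Adj a b := G.Adj a.1 b.1 ∧ a.2 = b.2
  symm := ⟨fun _ _ h => ⟨h.1.symm, h.2.symm⟩⟩
  loopless := ⟨fun a h => G.loopless.irrefl a.1 h.1⟩

/-- `T` is a strictly `f`-degenerate transversal-candidate set: every nonempty subgraph
`K` of the induced subgraph `H[T]` has a vertex `x` with `deg_K x < f x`. -/
def StrictlyFDegenerateOn {W : Type*} (H : SimpleGraph W) (f : W → ℕ) (T : Set W) : Prop :=
  ∀ K : H.Subgraph, K.verts ⊆ T → K.verts.Nonempty →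
    ∃ x ∈ K.verts, Nat.card (K.neighborSet x) < f x

end Paper


namespace Aux9

open SimpleGraph

section Abs
variable {V : Type*} (G : SimpleGraph V)

theorem abs4 (h4 : Paper.NoCycleLen G 4)
    {a b c d : V} (hab : G.Adj a b) (hbc : G.Adj b c) (hcd : G.Adj c d) (hda : G.Adj d a)
    (nac : a ≠ c) (nbd : b ≠ d) : False := by
  refine h4 a (.cons hab (.cons hbc (.cons hcd (.cons hda .nil)))) ?_ (by simp)
  simp [Walk.isCycle_def, Walk.isTrail_def, hab.ne, hbc.ne, hcd.ne, hda.ne', nac, nbd,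
    nac.symm, nbd.symm, hab.ne', hbc.ne', hcd.ne', hda.ne]

theorem abs9 (h9 : Paper.NoCycleLen G 9)
    {v0 v1 v2 v3 v4 v5 v6 v7 v8 : V}
    (a0 : G.Adj v0 v1) (a1 : G.Adj v1 v2) (a2 : G.Adj v2 v3) (a3 : G.Adj v3 v4)
    (a4 : G.Adj v4 v5) (a5 : G.Adj v5 v6) (a6 : G.Adj v6 v7) (a7 : G.Adj v7 v8)
    (a8 : G.Adj v8 v0)
    (n01 : v0 ≠ v1) (n02 : v0 ≠ v2) (n03 : v0 ≠ v3) (n04 : v0 ≠ v4) (n05 : v0 ≠ v5) (n06 : v0 ≠ v6) (n07 : v0 ≠ v7) (n08 : v0 ≠ v8) (n12 : v1 ≠ v2) (n13 : v1 ≠ v3) (n14 : v1 ≠ v4) (n15 : v1 ≠ v5) (n16 : v1 ≠ v6) (n17 : v1 ≠ v7) (n18 : v1 ≠ v8) (n23 : v2 ≠ v3) (n24 : v2 ≠ v4) (n25 : v2 ≠ v5) (n26 : v2 ≠ v6) (n27 : v2 ≠ v7) (n28 : v2 ≠ v8) (n34 : v3 ≠ v4) (n35 : v3 ≠ v5) (n36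 : v3 ≠ v6) (n37 : v3 ≠ v7) (n38 : v3 ≠ v8) (n45 : v4 ≠ v5) (n46 : v4 ≠ v6) (n47 : v4 ≠ v7) (n48 : v4 ≠ v8) (n56 : v5 ≠ v6) (n57 : v5 ≠ v7) (n58 : v5 ≠ v8) (n67 : v6 ≠ v7) (n68 : v6 ≠ v8) (n78 : v7 ≠ v8) : False := by
  refine h9 v0 (.cons a0 (.cons a1 (.cons a2 (.cons a3 (.cons a4 (.cons a5 (.cons a6
    (.cons a7 (.cons a8 .nil))))))))) ?_ (by simp)
  simp [Walk.isCycle_def, Walk.isTrail_def, n01, n02, n03, n04, n05, n06, n07, n08, n12, n13, n14, n15, n16, n17, n18, n23, n24, n25, n26, n27, n28, n34, n35, n36, n37, n38, n45, n46, n47, n48, n56, n57, n58, n67, n68, n78, Ne.symm n01, Ne.symm n02, Ne.symm n03, Ne.symm n04, Ne.symm n05, Ne.symm n06, Ne.symm n07, Ne.symm n08, Ne.symm n12, Ne.symm n13, Ne.symm n14, Ne.symm n15, Ne.symm n16, Ne.symm n17, Ne.symm n18, Ne.symm n23, Ne.symm n24, Ne.symm n25, Ne.symm n26, Ne.symm n27,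 Ne.symm n28, Ne.symm n34, Ne.symm n35, Ne.symm n36, Ne.symm n37, Ne.symm n38, Ne.symm n45, Ne.symm n46, Ne.symm n47, Ne.symm n48, Ne.symm n56, Ne.symm n57, Ne.symm n58, Ne.symm n67, Ne.symm n68, Ne.symm n78]

theorem abs53 (h53 : Paper.No5CycleNormAdj3 G)
    {x y a b c z : V}
    (hya : G.Adj y a) (hab : G.Adj a b) (hbc : G.Adj b c) (hcx : G.Adj c x)
    (hxy : G.Adj x y) (hxz : G.Adj x z) (hzy : G.Adj z y)
    (nxy : x ≠ y) (nxa : x ≠ a) (nxb : x ≠ b) (nxc : x ≠ c)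
    (nya : y ≠ a) (nyb : y ≠ b) (nyc : y ≠ c)
    (nab : a ≠ b) (nac : a ≠ c) (nbc : b ≠ c)
    (nzx : z ≠ x) (nzy : z ≠ y) (nza : z ≠ a) (nzb : z ≠ b) (nzc : z ≠ c) : False := by
  refine h53 y x (.cons hya (.cons hab (.cons hbc (.cons hcx (.cons hxy .nil)))))
    (.cons hxz (.cons hzy (.cons hxy.symm .nil))) ?_ (by simp) ?_ (by simp)
    ⟨x, y, nxy, ?_, ?_, ?_⟩
  · simp [Walk.isCycle_def, Walk.isTrail_def, nxy, nxa, nxb, nxc, nya, nyb, nyc, nab, nac, nbc,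
      Ne.symm nxy, Ne.symm nxa, Ne.symm nxb, Ne.symm nxc, Ne.symm nya, Ne.symm nyb,
      Ne.symm nyc, Ne.symm nab, Ne.symm nac, Ne.symm nbc]
  · simp [Walk.isCycle_def, Walk.isTrail_def, nxy, nzx, nzy, Ne.symm nxy, Ne.symm nzx,
      Ne.symm nzy]
  · simp [Sym2.eq_iff, nxa, Ne.symm nyc]
  · simp [Sym2.eq_iff]
  · intro u
    simp only [Walk.support_cons, Walk.support_nil, List.mem_cons, List.not_mem_nil, or_false]
    constructor
    · rintro ⟨h1, h2⟩
      rcases h2 with rfl | rfl | rfl | rfl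
      · exact .inl rfl
      · rcases h1 with rfl | rfl | rfl | rfl | rfl | rfl <;> simp_all
      · exact .inr rfl
      · exact .inl rfl
    · rintro (rfl | rfl)
      · exact ⟨by tauto, by tauto⟩
      · exact ⟨by tauto, by tauto⟩

end Abs
end Aux9


namespace Aux9

open SimpleGraph

variable {V : Type*} [Fintype V] {G : SimpleGraph V} [DecidableRel G.Adj]

lemma facePerm_fst_eq_snd (E : Paper.PlaneEmbedding G) (d : G.Dart) :
    (E.facePerm d).fst = d.snd := by
  show (E.rot (Paper.dartFlip G d)).fst = d.snd
  rw [E.fst_rot]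
  rfl

lemma facePerm_ne_symm (E : Paper.PlaneEmbedding G) (hmin : ∀ v : V, 3 ≤ G.degree v)
    (d : G.Dart) : E.facePerm d ≠ d.symm := by
  intro h
  have hfix : Function.IsFixedPt ⇑E.rot d.symm := h
  have hdeg : 1 < (G.neighborFinset d.snd).card := by
    rw [G.card_neighborFinset_eq_degree]
    have := hmin d.snd; omega
  obtain ⟨u, hu, hune⟩ := Finset.exists_mem_ne hdeg d.fst
  have hadj : G.Adj d.snd u := (G.mem_neighborFinset _ _).1 hu
  have hsc := E.rot_cyclic d.symm (Dart.mk (d.snd, u) hadj) rfl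
  obtain ⟨n, hn⟩ := hsc
  have : d.symm = Dart.mk (d.snd, u) hadj := by rw [← hn, hfix.perm_zpow n]
  exact hune (congrArg (fun e => e.snd) this).symm

lemma minimalPeriod_eq_nine (E : Paper.PlaneEmbedding G) (d0 : G.Dart)
    (h : Paper.faceSize E d0 = 9) :
    Function.minimalPeriod ⇑E.facePerm d0 = 9 := by
  classical
  set f := E.facePerm with hf
  have hper : Function.IsPeriodicPt ⇑f (orderOf f) d0 := by
    show f^[orderOf f] d0 = d0
    rw [← Equiv.Perm.coe_pow, pow_orderOf_eq_one]
    rfl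
  have hm : 0 < Function.minimalPeriod ⇑f d0 := hper.minimalPeriod_pos (orderOf_pos f)
  set m := Function.minimalPeriod ⇑f d0 with hmdef
  have horb : Paper.faceOf E d0 = ↑((Finset.range m).image (fun i => f^[i] d0)) := by
    ext e
    simp only [Paper.faceOf, Set.mem_setOf_eq, Finset.coe_image, Set.mem_image,
      Finset.mem_coe, Finset.mem_range]
    constructor
    · intro hs
      obtain ⟨i, _, rfl⟩ := hs.exists_pow_eq'
      exact ⟨i % m, Nat.mod_lt _ hm, by rw [hmdef, Function.iterate_mod_minimalPeriod_eq]; rfl⟩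
    · rintro ⟨i, -, rfl⟩
      exact ⟨(i : ℤ), by rw [zpow_natCast]; rfl⟩
  have hcard : (Paper.faceOf E d0).ncard = m := by
    rw [horb, Set.ncard_coe_finset, Finset.card_image_of_injOn, Finset.card_range]
    intro a ha b hb hab
    exact Function.iterate_injOn_Iio_minimalPeriod
      (by simpa using ha) (by simpa using hb) hab
  rw [Paper.faceSize, hcard] at h
  exact h

lemma pow_dart_eq_iff (E : Paper.PlaneEmbedding G) (d0 : G.Dart)
    (h : Paper.faceSize E d0 = 9) (a b : ℕ) :
    (E.facePerm ^ a) d0 = (E.facePerm ^ b) d0 ↔ a % 9 = b % 9 := by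
  have h3 := minimalPeriod_eq_nine E d0 h
  have key : ∀ n : ℕ, (⇑E.facePerm)^[n % 9] d0 = (E.facePerm ^ n) d0 := fun n => by
    rw [← h3, Function.iterate_mod_minimalPeriod_eq]; rfl
  constructor
  · intro he
    refine Function.iterate_injOn_Iio_minimalPeriod (f := ⇑E.facePerm) (x := d0) ?_ ?_ ?_
    · rw [h3]; exact Set.mem_Iio.2 (Nat.mod_lt _ (by norm_num))
    · rw [h3]; exact Set.mem_Iio.2 (Nat.mod_lt _ (by norm_num))
    · show (⇑E.facePerm)^[a % 9] d0 = (⇑E.facePerm)^[b % 9] d0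
      rw [key, key, he]
  · intro he
    rw [← key, ← key, he]

end Aux9

open SimpleGraph

/-- The boundary walk of every 9-face consists of one 3-cycle and one 6-cycle, or
of three 3-cycles. -/
theorem statement14 {V : Type*} [Fintype V] (G : SimpleGraph V) [DecidableRel G.Adj]
    (hconn : G.Connected)
    (E : Paper.PlaneEmbedding G) (hE : E.IsPlane)
    (hmin : ∀ v : V, 3 ≤ G.degree v)
    (h4 : Paper.NoCycleLen G 4) (h7 : Paper.NoCycleLen G 7)
    (h9 : Paper.NoCycleLen G 9) (h53 : Paper.No5CycleNormAdj3 G) :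
    ∀ d0 : G.Dart, Paper.faceSize E d0 = 9 →
      (∃ k : ℕ, Paper.boundaryVert E d0 k = Paper.boundaryVert E d0 (k + 3) ∧
        [Paper.boundaryVert E d0 k, Paper.boundaryVert E d0 (k + 1),
         Paper.boundaryVert E d0 (k + 2), Paper.boundaryVert E d0 (k + 4),
         Paper.boundaryVert E d0 (k + 5), Paper.boundaryVert E d0 (k + 6),
         Paper.boundaryVert E d0 (k + 7), Paper.boundaryVert E d0 (k + 8)].Nodup) ∨
      (∃ k : ℕ, Paper.boundaryVert E d0 k = Paper.boundaryVert E d0 (k + 3) ∧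
        Paper.boundaryVert E d0 k = Paper.boundaryVert E d0 (k + 6) ∧
        [Paper.boundaryVert E d0 k, Paper.boundaryVert E d0 (k + 1),
         Paper.boundaryVert E d0 (k + 2), Paper.boundaryVert E d0 (k + 4),
         Paper.boundaryVert E d0 (k + 5), Paper.boundaryVert E d0 (k + 7),
         Paper.boundaryVert E d0 (k + 8)].Nodup) ∨
      (∃ k : ℕ, Paper.boundaryVert E d0 k = Paper.boundaryVert E d0 (k + 3) ∧
        Paper.boundaryVert E d0 (k + 4) = Paper.boundaryVert E d0 (k + 7) ∧
        [Paper.boundaryVert E d0 k, Paper.boundaryVert E d0 (k + 1),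
         Paper.boundaryVert E d0 (k + 2), Paper.boundaryVert E d0 (k + 4),
         Paper.boundaryVert E d0 (k + 5), Paper.boundaryVert E d0 (k + 6),
         Paper.boundaryVert E d0 (k + 8)].Nodup) := by
  intro d0 hsize
  classical
  set w := Paper.boundaryVert E d0 with hwdef
  have hD : ∀ a b : ℕ, (E.facePerm ^ a) d0 = (E.facePerm ^ b) d0 ↔ a % 9 = b % 9 :=
    Aux9.pow_dart_eq_iff E d0 hsize
  have wnext : ∀ i : ℕ, ((E.facePerm ^ i) d0).snd = w (i+1) := by
    intro i
    have hstep : (E.facePerm ^ (i+1)) d0 = E.facePerm ((E.facePerm ^ i) d0) := by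
      rw [pow_succ']; rfl
    show _ = ((E.facePerm ^ (i+1)) d0).fst
    rw [hstep, Aux9.facePerm_fst_eq_snd]
  have htoProd : ∀ i : ℕ, ((E.facePerm ^ i) d0).toProd = (w i, w (i+1)) := by
    intro i
    exact Prod.ext rfl (wnext i)
  have adj : ∀ i : ℕ, G.Adj (w i) (w (i+1)) := by
    intro i
    have h := ((E.facePerm ^ i) d0).adj
    rw [wnext i] at h
    exact h
  have wper : ∀ i : ℕ, w (i+9) = w i := fun i =>
    congrArg (fun d : G.Dart => d.fst) ((hD (i+9) i).2 (by omega))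
  have dartEq : ∀ i : ℕ, w i = w (i+3) → w (i+1) = w (i+4) → False := by
    intro i h1 h2
    have he : (E.facePerm ^ i) d0 = (E.facePerm ^ (i+3)) d0 := by
      refine Dart.ext _ _ ?_
      rw [htoProd i, htoProd (i+3)]
      have h3 : w (i+3+1) = w (i+4) := rfl
      rw [h3, h1, h2]
    have := (hD _ _).1 he
    omega
  have ne1 : ∀ i : ℕ, w i ≠ w (i+1) := fun i => (adj i).ne
  have ne2 : ∀ i : ℕ, w i ≠ w (i+2) := by
    intro i h
    apply Aux9.facePerm_ne_symm E hmin ((E.facePerm ^ i) d0)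
    have hstep : E.facePerm ((E.facePerm ^ i) d0) = (E.facePerm ^ (i+1)) d0 := by
      rw [pow_succ']; rfl
    rw [hstep]
    refine Dart.ext _ _ ?_
    show ((E.facePerm ^ (i+1)) d0).toProd = ((E.facePerm ^ i) d0).toProd.swap
    rw [htoProd (i+1), htoProd i, Prod.swap_prod_mk]
    exact Prod.ext rfl h.symm
  have ne4 : ∀ i : ℕ, w i ≠ w (i+4) := by
    intro i h
    have hcd : G.Adj (w (i+2)) (w (i+3)) := adj (i+2)
    have hda : G.Adj (w (i+3)) (w i) := by
      have ha := adj (i+3)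
      rw [show w (i+3+1) = w (i+4) from rfl, ← h] at ha
      exact ha
    exact Aux9.abs4 G h4 (adj i) (adj (i+1)) hcd hda (ne2 i) (ne2 (i+1))
  have ne5 : ∀ i : ℕ, w i ≠ w (i+5) := fun i h =>
    ne4 (i+5) (show w (i+5) = w (i+9) from h.symm.trans (wper i).symm)
  have ne7 : ∀ i : ℕ, w i ≠ w (i+7) := fun i h =>
    ne2 (i+7) (show w (i+7) = w (i+9) from h.symm.trans (wper i).symm)
  have ne8 : ∀ i : ℕ, w i ≠ w (i+8) := fun i h =>
    ne1 (i+8) (show w (i+8) = w (i+9) from h.symm.trans (wper i).symm)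
  have wq6 : ∀ i : ℕ, w i = w (i+6) → w (i+6) = w (i+9) := fun i h =>
    h.symm.trans (wper i).symm
  have qper : ∀ i : ℕ, w i = w (i+3) → w (i+9) = w (i+12) := fun i h =>
    (wper i).trans (h.trans (show w (i+3) = w (i+12) from (wper (i+3)).symm))
  have qtriple : ∀ i : ℕ, w i = w (i+3) → w (i+2) = w (i+5) → False := by
    intro i h0 h2
    have hcd : G.Adj (w (i+2)) (w (i+4)) := by
      have ha := (adj (i+4)).symm
      rw [show w (i+4+1) = w (i+5) from rfl, ← h2] at ha
      exact ha
    have hda : G.Adj (w (i+4)) (w i) := by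
      have ha := (adj (i+3)).symm
      rw [show w (i+3+1) = w (i+4) from rfl, ← h0] at ha
      exact ha
    exact Aux9.abs4 G h4 (adj i) (adj (i+1)) hcd hda (ne2 i) (fun h => dartEq i h0 h)
  have hex : ∃ i : ℕ, w i = w (i+3) := by
    by_contra hno
    push_neg at hno
    have a8 : G.Adj (w 8) (w (0+9)) := adj 8
    rw [wper 0] at a8
    exact Aux9.abs9 G h9
      (show G.Adj (w 0) (w 1) from adj 0)
      (show G.Adj (w 1) (w 2) from adj 1)
      (show G.Adj (w 2) (w 3) from adj 2)
      (show G.Adj (w 3) (w 4) from adj 3)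
      (show G.Adj (w 4) (w 5) from adj 4)
      (show G.Adj (w 5) (w 6) from adj 5)
      (show G.Adj (w 6) (w 7) from adj 6)
      (show G.Adj (w 7) (w 8) from adj 7)
      a8
      (show w 0 ≠ w 1 from ne1 0)
      (show w 0 ≠ w 2 from ne2 0)
      (show w 0 ≠ w 3 from hno 0)
      (show w 0 ≠ w 4 from ne4 0)
      (show w 0 ≠ w 5 from ne5 0)
      (show w 0 ≠ w 6 from fun h => hno (0+6) (wq6 0 h))
      (show w 0 ≠ w 7 from ne7 0)
      (show w 0 ≠ w 8 from ne8 0)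
      (show w 1 ≠ w 2 from ne1 1)
      (show w 1 ≠ w 3 from ne2 1)
      (show w 1 ≠ w 4 from hno 1)
      (show w 1 ≠ w 5 from ne4 1)
      (show w 1 ≠ w 6 from ne5 1)
      (show w 1 ≠ w 7 from fun h => hno (1+6) (wq6 1 h))
      (show w 1 ≠ w 8 from ne7 1)
      (show w 2 ≠ w 3 from ne1 2)
      (show w 2 ≠ w 4 from ne2 2)
      (show w 2 ≠ w 5 from hno 2)
      (show w 2 ≠ w 6 from ne4 2)
      (show w 2 ≠ w 7 from ne5 2)
      (show w 2 ≠ w 8 from fun h => hno (2+6) (wq6 2 h))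
      (show w 3 ≠ w 4 from ne1 3)
      (show w 3 ≠ w 5 from ne2 3)
      (show w 3 ≠ w 6 from hno 3)
      (show w 3 ≠ w 7 from ne4 3)
      (show w 3 ≠ w 8 from ne5 3)
      (show w 4 ≠ w 5 from ne1 4)
      (show w 4 ≠ w 6 from ne2 4)
      (show w 4 ≠ w 7 from hno 4)
      (show w 4 ≠ w 8 from ne4 4)
      (show w 5 ≠ w 6 from ne1 5)
      (show w 5 ≠ w 7 from ne2 5)
      (show w 5 ≠ w 8 from hno 5)
      (show w 6 ≠ w 7 from ne1 6)
      (show w 6 ≠ w 8 from ne2 6)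
      (show w 7 ≠ w 8 from ne1 7)
  obtain ⟨j, hQj⟩ := hex
  have hQ9 : w (j+9) = w (j+12) := qper j hQj
  have nQ1 : ¬ (w (j+1) = w (j+4)) := fun h => dartEq j hQj h
  have nQ2 : ¬ (w (j+2) = w (j+5)) := fun h => qtriple j hQj h
  have nQ8 : ¬ (w (j+8) = w (j+11)) := fun h => dartEq (j+8) h hQ9
  have nQ7 : ¬ (w (j+7) = w (j+10)) := fun h => qtriple (j+7) h hQ9
  by_cases h36 : w (j+3) = w (j+6)
  · refine Or.inr (Or.inl ⟨j, hQj, hQj.trans h36, ?_⟩)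
    have pw0 : w (j) ≠ w (j+1) := ne1 (j)
    have pw1 : w (j) ≠ w (j+2) := ne2 (j)
    have pw2 : w (j) ≠ w (j+4) := ne4 (j)
    have pw3 : w (j) ≠ w (j+5) := ne5 (j)
    have pw4 : w (j) ≠ w (j+7) := ne7 (j)
    have pw5 : w (j) ≠ w (j+8) := ne8 (j)
    have pw6 : w (j+1) ≠ w (j+2) := ne1 (j+1)
    have pw7 : w (j+1) ≠ w (j+4) := nQ1
    have pw8 : w (j+1) ≠ w (j+5) := ne4 (j+1)
    have pw9 : w (j+1) ≠ w (j+7) := fun h => nQ7 (wq6 (j+1) h)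
    have pw10 : w (j+1) ≠ w (j+8) := ne7 (j+1)
    have pw11 : w (j+2) ≠ w (j+4) := ne2 (j+2)
    have pw12 : w (j+2) ≠ w (j+5) := nQ2
    have pw13 : w (j+2) ≠ w (j+7) := ne5 (j+2)
    have pw14 : w (j+2) ≠ w (j+8) := fun h => nQ8 (wq6 (j+2) h)
    have pw15 : w (j+4) ≠ w (j+5) := ne1 (j+4)
    have pw16 : w (j+4) ≠ w (j+7) := fun h => dartEq (j+3) h36 h
    have pw17 : w (j+4) ≠ w (j+8) := ne4 (j+4)
    have pw18 : w (j+5) ≠ w (j+7) := ne2 (j+5)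
    have pw19 : w (j+5) ≠ w (j+8) := fun h => qtriple (j+3) h36 h
    have pw20 : w (j+7) ≠ w (j+8) := ne1 (j+7)
    simp [pw0, pw1, pw2, pw3, pw4, pw5, pw6, pw7, pw8, pw9, pw10, pw11, pw12, pw13, pw14, pw15, pw16, pw17, pw18, pw19, pw20, Ne.symm pw0, Ne.symm pw1, Ne.symm pw2, Ne.symm pw3, Ne.symm pw4, Ne.symm pw5, Ne.symm pw6, Ne.symm pw7, Ne.symm pw8, Ne.symm pw9, Ne.symm pw10, Ne.symm pw11, Ne.symm pw12, Ne.symm pw13, Ne.symm pw14, Ne.symm pw15, Ne.symm pw16, Ne.symm pw17, Ne.symm pw18, Ne.symm pw19, Ne.symm pw20]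
  · by_cases h47 : w (j+4) = w (j+7)
    · refine Or.inr (Or.inr ⟨j, hQj, h47, ?_⟩)
      have pw0 : w (j) ≠ w (j+1) := ne1 (j)
      have pw1 : w (j) ≠ w (j+2) := ne2 (j)
      have pw2 : w (j) ≠ w (j+4) := ne4 (j)
      have pw3 : w (j) ≠ w (j+5) := ne5 (j)
      have pw4 : w (j) ≠ w (j+6) := fun h => h36 (hQj.symm.trans ((wper j).symm.trans (wq6 j h).symm))
      have pw5 : w (j) ≠ w (j+8) := ne8 (j)
      have pw6 : w (j+1) ≠ w (j+2) := ne1 (j+1)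
      have pw7 : w (j+1) ≠ w (j+4) := nQ1
      have pw8 : w (j+1) ≠ w (j+5) := ne4 (j+1)
      have pw9 : w (j+1) ≠ w (j+6) := ne5 (j+1)
      have pw10 : w (j+1) ≠ w (j+8) := ne7 (j+1)
      have pw11 : w (j+2) ≠ w (j+4) := ne2 (j+2)
      have pw12 : w (j+2) ≠ w (j+5) := nQ2
      have pw13 : w (j+2) ≠ w (j+6) := ne4 (j+2)
      have pw14 : w (j+2) ≠ w (j+8) := fun h => nQ8 (wq6 (j+2) h)
      have pw15 : w (j+4) ≠ w (j+5) := ne1 (j+4)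
      have pw16 : w (j+4) ≠ w (j+6) := ne2 (j+4)
      have pw17 : w (j+4) ≠ w (j+8) := ne4 (j+4)
      have pw18 : w (j+5) ≠ w (j+6) := ne1 (j+5)
      have pw19 : w (j+5) ≠ w (j+8) := fun h => dartEq (j+4) h47 h
      have pw20 : w (j+6) ≠ w (j+8) := ne2 (j+6)
      simp [pw0, pw1, pw2, pw3, pw4, pw5, pw6, pw7, pw8, pw9, pw10, pw11, pw12, pw13, pw14, pw15, pw16, pw17, pw18, pw19, pw20, Ne.symm pw0, Ne.symm pw1, Ne.symm pw2, Ne.symm pw3, Ne.symm pw4, Ne.symm pw5, Ne.symm pw6, Ne.symm pw7, Ne.symm pw8, Ne.symm pw9, Ne.symm pw10, Ne.symm pw11, Ne.symm pw12, Ne.symm pw13, Ne.symm pw14, Ne.symm pw15, Ne.symm pw16, Ne.symm pw17, Ne.symm pw18, Ne.symm pw19, Ne.symm pw20]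
    · by_cases h58 : w (j+5) = w (j+8)
      · refine Or.inr (Or.inr ⟨j+5, h58, hQ9, ?_⟩)
        have pw0 : w (j+5) ≠ w (j+5+1) := ne1 (j+5)
        have pw1 : w (j+5) ≠ w (j+5+2) := ne2 (j+5)
        have pw2 : w (j+5) ≠ w (j+5+4) := ne4 (j+5)
        have pw3 : w (j+5) ≠ w (j+5+5) := ne5 (j+5)
        have pw4 : w (j+5) ≠ w (j+5+6) := fun h => nQ2 ((wper (j+2)).symm.trans ((wq6 (j+5) h).trans (wper (j+5))))
        have pw5 : w (j+5) ≠ w (j+5+8) := ne8 (j+5)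
        have pw6 : w (j+5+1) ≠ w (j+5+2) := ne1 (j+5+1)
        have pw7 : w (j+5+1) ≠ w (j+5+4) := fun h => dartEq (j+5) h58 h
        have pw8 : w (j+5+1) ≠ w (j+5+5) := ne4 (j+5+1)
        have pw9 : w (j+5+1) ≠ w (j+5+6) := ne5 (j+5+1)
        have pw10 : w (j+5+1) ≠ w (j+5+8) := ne7 (j+5+1)
        have pw11 : w (j+5+2) ≠ w (j+5+4) := ne2 (j+5+2)
        have pw12 : w (j+5+2) ≠ w (j+5+5) := nQ7
        have pw13 : w (j+5+2) ≠ w (j+5+6) := ne4 (j+5+2)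
        have pw14 : w (j+5+2) ≠ w (j+5+8) := fun h => h47 ((wper (j+4)).symm.trans ((wq6 (j+7) h).trans (wper (j+7))))
        have pw15 : w (j+5+4) ≠ w (j+5+5) := ne1 (j+5+4)
        have pw16 : w (j+5+4) ≠ w (j+5+6) := ne2 (j+5+4)
        have pw17 : w (j+5+4) ≠ w (j+5+8) := ne4 (j+5+4)
        have pw18 : w (j+5+5) ≠ w (j+5+6) := ne1 (j+5+5)
        have pw19 : w (j+5+5) ≠ w (j+5+8) := fun h => nQ1 ((wper (j+1)).symm.trans (h.trans (wper (j+4))))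
        have pw20 : w (j+5+6) ≠ w (j+5+8) := ne2 (j+5+6)
        simp [pw0, pw1, pw2, pw3, pw4, pw5, pw6, pw7, pw8, pw9, pw10, pw11, pw12, pw13, pw14, pw15, pw16, pw17, pw18, pw19, pw20, Ne.symm pw0, Ne.symm pw1, Ne.symm pw2, Ne.symm pw3, Ne.symm pw4, Ne.symm pw5, Ne.symm pw6, Ne.symm pw7, Ne.symm pw8, Ne.symm pw9, Ne.symm pw10, Ne.symm pw11, Ne.symm pw12, Ne.symm pw13, Ne.symm pw14, Ne.symm pw15, Ne.symm pw16, Ne.symm pw17, Ne.symm pw18, Ne.symm pw19, Ne.symm pw20]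
      · refine Or.inl ⟨j, hQj, ?_⟩
        have pw0 : w (j) ≠ w (j+1) := ne1 (j)
        have pw1 : w (j) ≠ w (j+2) := ne2 (j)
        have pw2 : w (j) ≠ w (j+4) := ne4 (j)
        have pw3 : w (j) ≠ w (j+5) := ne5 (j)
        have pw4 : w (j) ≠ w (j+6) := fun h => h36 (hQj.symm.trans ((wper j).symm.trans (wq6 j h).symm))
        have pw5 : w (j) ≠ w (j+7) := ne7 (j)
        have pw6 : w (j) ≠ w (j+8) := ne8 (j)
        have pw7 : w (j+1) ≠ w (j+2) := ne1 (j+1)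
        have pw8 : w (j+1) ≠ w (j+4) := nQ1
        have pw9 : w (j+1) ≠ w (j+5) := ne4 (j+1)
        have pw10 : w (j+1) ≠ w (j+6) := ne5 (j+1)
        have pw11 : w (j+1) ≠ w (j+7) := fun h => nQ7 (wq6 (j+1) h)
        have pw12 : w (j+1) ≠ w (j+8) := ne7 (j+1)
        have pw13 : w (j+2) ≠ w (j+4) := ne2 (j+2)
        have pw14 : w (j+2) ≠ w (j+5) := nQ2
        have pw15 : w (j+2) ≠ w (j+6) := ne4 (j+2)
        have pw16 : w (j+2) ≠ w (j+7) := ne5 (j+2)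
        have pw17 : w (j+2) ≠ w (j+8) := fun h => nQ8 (wq6 (j+2) h)
        have pw18 : w (j+4) ≠ w (j+5) := ne1 (j+4)
        have pw19 : w (j+4) ≠ w (j+6) := ne2 (j+4)
        have pw20 : w (j+4) ≠ w (j+7) := h47
        have pw21 : w (j+4) ≠ w (j+8) := ne4 (j+4)
        have pw22 : w (j+5) ≠ w (j+6) := ne1 (j+5)
        have pw23 : w (j+5) ≠ w (j+7) := ne2 (j+5)
        have pw24 : w (j+5) ≠ w (j+8) := h58
        have pw25 : w (j+6) ≠ w (j+7) := ne1 (j+6)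
        have pw26 : w (j+6) ≠ w (j+8) := ne2 (j+6)
        have pw27 : w (j+7) ≠ w (j+8) := ne1 (j+7)
        simp [pw0, pw1, pw2, pw3, pw4, pw5, pw6, pw7, pw8, pw9, pw10, pw11, pw12, pw13, pw14, pw15, pw16, pw17, pw18, pw19, pw20, pw21, pw22, pw23, pw24, pw25, pw26, pw27, Ne.symm pw0, Ne.symm pw1, Ne.symm pw2, Ne.symm pw3, Ne.symm pw4, Ne.symm pw5, Ne.symm pw6, Ne.symm pw7, Ne.symm pw8, Ne.symm pw9, Ne.symm pw10, Ne.symm pw11, Ne.symm pw12, Ne.symm pw13, Ne.symm pw14, Ne.symm pw15, Ne.symm pw16, Ne.symm pw17, Ne.symm pw18, Ne.symm pw19, Ne.symm pw20, Ne.symm pw21, Ne.symm pw22, Ne.symm pw23, Ne.symm pw24, Ne.symm pw25, Ne.symm pw26, Ne.symm pw27]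
end

section
/- Let G be a connected plane graph with minimum degree at least 3 that contains no cycle of length 4, no cycle of length 7, no cycle of length 9, and no 5-cycle normally adjacent to a 3-cycle. Then no 3-face of G is adjacent to a 5-face of G. -/
open SimpleGraph Paper

section AuxStatement16
variable {V : Type*} {G : SimpleGraph V}

private lemma facePerm_fst' (E : PlaneEmbedding G) (x : G.Dart) :
    (E.facePerm x).fst = x.snd := by
  show (E.rot (dartFlip G x)).fst = x.snd
  rw [E.fst_rot]; rfl

private lemma facePerm_ne' (E : PlaneEmbedding G) (x : G.Dart) : E.facePerm x ≠ x := by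
  intro h
  have := facePerm_fst' E x
  rw [h] at this
  exact x.adj.ne this

private lemma rot_ne_self' [Fintype V] [DecidableRel G.Adj] (E : PlaneEmbedding G)
    (hmin : ∀ v : V, 3 ≤ G.degree v) (g : G.Dart) : E.rot g ≠ g := by
  intro h
  have key : ∀ h' : G.Dart, h'.fst = g.fst → h' = g := by
    intro h' hf
    obtain ⟨n, hn⟩ := E.rot_cyclic g h' hf.symm
    have : (E.rot ^ n) g = g := Function.IsFixedPt.perm_zpow h n
    rw [this] at hn; exact hn.symm
  have hsub : G.neighborFinset g.fst ⊆ {g.snd} := by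
    intro v hv
    rw [mem_neighborFinset] at hv
    have := key ⟨(g.fst, v), hv⟩ rfl
    have : v = g.snd := congrArg (fun d => d.snd) this
    simp [this]
  have hle := Finset.card_le_card hsub
  simp only [Finset.card_singleton] at hle
  have h3 := hmin g.fst
  rw [SimpleGraph.degree] at h3
  omega

private lemma facePerm_not_symm' [Fintype V] [DecidableRel G.Adj] (E : PlaneEmbedding G)
    (hmin : ∀ v : V, 3 ≤ G.degree v) (g : G.Dart) : E.facePerm g ≠ g.symm := by
  intro h
  have : E.rot g.symm = g.symm := h
  exact rot_ne_self' E hmin g.symm this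

private lemma faceOf_sameCycle' (E : PlaneEmbedding G) {d e : G.Dart}
    (h : E.facePerm.SameCycle d e) : faceOf E d = faceOf E e := by
  ext x
  exact ⟨fun hx => h.symm.trans hx, fun hx => h.trans hx⟩

private lemma pow_faceSize_apply' [Fintype V] (E : PlaneEmbedding G) (d : G.Dart) :
    (E.facePerm ^ faceSize E d) d = d := by
  classical
  have : Finite G.Dart := Finite.of_injective _ Dart.toProd_injective
  have : Fintype G.Dart := Fintype.ofFinite _
  have hne : E.facePerm d ≠ d := facePerm_ne' E d
  have hsupp : d ∈ E.facePerm.support := by simp [Equiv.Perm.mem_support, hne]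
  have hset : faceOf E d = ↑(E.facePerm.cycleOf d).support := by
    ext e
    simp only [faceOf, Set.mem_setOf_eq, Finset.coe_sort_coe, Finset.mem_coe,
      Equiv.Perm.mem_support_cycleOf_iff]
    exact ⟨fun h => ⟨h, hsupp⟩, fun h => h.1⟩
  have hsize : faceSize E d = (E.facePerm.cycleOf d).support.card := by
    rw [faceSize, hset, Set.ncard_coe_finset]
  have hcyc : (E.facePerm.cycleOf d).IsCycle := Equiv.Perm.isCycle_cycleOf _ hne
  have horder : orderOf (E.facePerm.cycleOf d) = (E.facePerm.cycleOf d).support.card :=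
    hcyc.orderOf
  calc (E.facePerm ^ faceSize E d) d
      = (E.facePerm.cycleOf d ^ faceSize E d) d := (Equiv.Perm.cycleOf_pow_apply_self _ _ _).symm
    _ = d := by rw [hsize, ← horder, pow_orderOf_eq_one]; rfl

private lemma cycle4' {a b c d : V} (hab : G.Adj a b) (hbc : G.Adj b c) (hcd : G.Adj c d)
    (hda : G.Adj d a) (hac : a ≠ c) (hbd : b ≠ d) :
    ∃ (w : G.Walk a a), w.IsCycle ∧ w.length = 4 := by
  refine ⟨Walk.cons hab (Walk.cons hbc (Walk.cons hcd (Walk.cons hda Walk.nil))), ?_, rfl⟩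
  have h1 := hab.ne; have h2 := hbc.ne; have h3 := hcd.ne; have h4 := hda.ne
  rw [Walk.isCycle_def, Walk.isTrail_def]
  refine ⟨?_, by simp, ?_⟩
  · simp [Walk.edges, Sym2.eq_iff]
    aesop
  · simp [Walk.support]
    aesop

private lemma cycle5' {a b c d e : V} (hab : G.Adj a b) (hbc : G.Adj b c) (hcd : G.Adj c d)
    (hde : G.Adj d e) (hea : G.Adj e a) (hac : a ≠ c) (had : a ≠ d) (hbd : b ≠ d)
    (hbe : b ≠ e) (hce : c ≠ e) :
    (Walk.cons hab (Walk.cons hbc (Walk.cons hcd (Walk.cons hde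
      (Walk.cons hea Walk.nil))))).IsCycle := by
  have h1 := hab.ne; have h2 := hbc.ne; have h3 := hcd.ne; have h4 := hde.ne
  have h5 := hea.ne
  rw [Walk.isCycle_def, Walk.isTrail_def]
  refine ⟨?_, by simp, ?_⟩
  · simp [Walk.edges, Sym2.eq_iff]
    aesop
  · simp [Walk.support]
    aesop

private lemma cycle3' {a b c : V} (hab : G.Adj a b) (hbc : G.Adj b c) (hca : G.Adj c a) :
    (Walk.cons hab (Walk.cons hbc (Walk.cons hca Walk.nil))).IsCycle := by
  have h1 := hab.ne; have h2 := hbc.ne; have h3 := hca.ne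
  rw [Walk.isCycle_def, Walk.isTrail_def]
  refine ⟨?_, by simp, ?_⟩
  · simp [Walk.edges, Sym2.eq_iff]
    aesop
  · simp [Walk.support]
    aesop

end AuxStatement16

/-- No 3-face is adjacent to a 5-face. -/
theorem statement16 {V : Type*} [Fintype V] (G : SimpleGraph V) [DecidableRel G.Adj]
    (hconn : G.Connected)
    (E : Paper.PlaneEmbedding G) (hE : E.IsPlane)
    (hmin : ∀ v : V, 3 ≤ G.degree v)
    (h4 : Paper.NoCycleLen G 4) (h7 : Paper.NoCycleLen G 7)
    (h9 : Paper.NoCycleLen G 9) (h53 : Paper.No5CycleNormAdj3 G) :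
    ∀ d1 d2 : G.Dart, Paper.faceSize E d1 = 3 → Paper.faceSize E d2 = 5 →
      ¬ Paper.FacesAdjacent E d1 d2 := by
  intro d1 d2 hs1 hs2 hadj
  obtain ⟨e1, e2, hc1, hc2, hedge⟩ := hadj
  have hs1' : faceSize E e1 = 3 := by
    rw [faceSize, ← faceOf_sameCycle' E hc1]; exact hs1
  have hs2' : faceSize E e2 = 5 := by
    rw [faceSize, ← faceOf_sameCycle' E hc2]; exact hs2
  rcases (dart_edge_eq_iff e1 e2).1 hedge with rfl | rfl
  · -- same dart: same face, sizes 3 ≠ 5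
    rw [hs2'] at hs1'
    omega
  · -- e1 = e2.symm
    set F := E.facePerm with hF
    set b : ℕ → V := fun i => ((F ^ i) e2).fst with hbdef
    have hpowsucc : ∀ i : ℕ, (F ^ (i + 1)) e2 = F ((F ^ i) e2) := by
      intro i; rw [pow_succ', Equiv.Perm.mul_apply]
    have hsnd : ∀ i : ℕ, ((F ^ i) e2).snd = b (i + 1) := by
      intro i
      rw [hbdef]
      simp only
      rw [hpowsucc i, facePerm_fst']
    have hadjb : ∀ i : ℕ, G.Adj (b i) (b (i + 1)) := by
      intro i
      have := ((F ^ i) e2).adj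
      rwa [hsnd i] at this
    have h5sz : (F ^ 5) e2 = e2 := by rw [← hs2']; exact pow_faceSize_apply' E e2
    have hb5 : b 5 = b 0 := by
      rw [hbdef]; simp only [pow_zero, Equiv.Perm.one_apply, h5sz]
    have hb6 : b 6 = b 1 := by
      rw [hbdef]
      simp only
      rw [show (6 : ℕ) = 1 + 5 by norm_num, pow_add, Equiv.Perm.mul_apply, h5sz]
    have hne2 : ∀ i : ℕ, b i ≠ b (i + 2) := by
      intro i h
      apply facePerm_not_symm' E hmin ((F ^ i) e2)
      apply Dart.toProd_injective
      have h1 : (F ((F ^ i) e2)).fst = ((F ^ i) e2).snd := facePerm_fst' E _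
      have h2 : (F ((F ^ i) e2)).snd = b (i + 2) := by
        rw [← hpowsucc i, hsnd (i + 1)]
      have h3 : ((F ^ i) e2).fst = b i := rfl
      ext
      · rw [h1]; rfl
      · show (F ((F ^ i) e2)).snd = ((F ^ i) e2).fst
        rw [h2, h3, ← h]
    -- the three-face
    have h3sz : (F ^ 3) e2.symm = e2.symm := by rw [← hs1']; exact pow_faceSize_apply' E e2.symm
    set A : V := ((F ^ 2) e2.symm).fst with hAdef
    have hA1 : G.Adj (b 0) A := by
      have h1 : (F e2.symm).fst = e2.symm.snd := facePerm_fst' E _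
      have h2 : (F e2.symm).snd = A := by
        have : (F ^ 2) e2.symm = F (F e2.symm) := by
          rw [show (2 : ℕ) = 1 + 1 by norm_num, pow_succ', Equiv.Perm.mul_apply, pow_one]
        rw [hAdef, this, facePerm_fst']
      have := (F e2.symm).adj
      rw [h1, h2] at this
      have hb0 : e2.symm.snd = b 0 := rfl
      rwa [hb0] at this
    have hpowsucc' : ∀ (g : G.Dart) (i : ℕ), (F ^ (i + 1)) g = F ((F ^ i) g) := by
      intro g i; rw [pow_succ', Equiv.Perm.mul_apply]
    have hA2 : G.Adj A (b 1) := by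
      have h1 : ((F ^ 2) e2.symm).snd = ((F ^ 3) e2.symm).fst := by
        rw [show (3 : ℕ) = 2 + 1 by norm_num, hpowsucc' e2.symm 2]
        exact (facePerm_fst' E _).symm
      have := ((F ^ 2) e2.symm).adj
      rw [h1, h3sz] at this
      have hb1 : e2.symm.fst = b 1 := by
        show e2.snd = b 1
        rw [show e2 = (F ^ 0) e2 by simp, hsnd 0]
      rwa [hb1] at this
    -- nonequalities
    have a01 : G.Adj (b 0) (b 1) := hadjb 0
    have a12 : G.Adj (b 1) (b 2) := hadjb 1
    have a23 : G.Adj (b 2) (b 3) := hadjb 2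
    have a34 : G.Adj (b 3) (b 4) := hadjb 3
    have n02 : b 0 ≠ b 2 := hne2 0
    have n13 : b 1 ≠ b 3 := hne2 1
    have n24 : b 2 ≠ b 4 := hne2 2
    have n30 : b 3 ≠ b 0 := by have := hne2 3; rwa [hb5] at this
    have n41 : b 4 ≠ b 1 := by have := hne2 4; rwa [hb6] at this
    have hadj40 : G.Adj (b 4) (b 0) := by have := hadjb 4; rwa [hb5] at this
    by_cases hA2eq : A = b 2
    · rw [hA2eq] at hA1
      obtain ⟨w, hw, hwl⟩ := cycle4' hA1 a23 a34 hadj40 n30.symm n24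
      exact h4 _ w hw hwl
    · by_cases hA3eq : A = b 3
      · rw [hA3eq] at hA2
        obtain ⟨w, hw, hwl⟩ := cycle4' a01 hA2.symm a34 hadj40 n30.symm n41.symm
        exact h4 _ w hw hwl
      · by_cases hA4eq : A = b 4
        · rw [hA4eq] at hA2
          obtain ⟨w, hw, hwl⟩ := cycle4' a12 a23 a34 hA2 n13 n24
          exact h4 _ w hw hwl
        · -- normally adjacent 5-cycle and 3-cycle
          set c1 : G.Walk (b 0) (b 0) :=
            Walk.cons a01 (Walk.cons a12 (Walk.cons a23
              (Walk.cons a34 (Walk.cons hadj40 Walk.nil)))) with hc1def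
          set c2 : G.Walk (b 0) (b 0) :=
            Walk.cons hA1 (Walk.cons hA2 (Walk.cons a01.symm Walk.nil)) with hc2def
          have hcyc1 : c1.IsCycle :=
            cycle5' _ _ _ _ _ n02 n30.symm n13 n41.symm n24
          have hcyc2 : c2.IsCycle := cycle3' _ _ _
          apply h53 (b 0) (b 0) c1 c2 hcyc1 rfl hcyc2 rfl
          refine ⟨b 0, b 1, a01.ne, ?_, ?_, ?_⟩
          · rw [hc1def]; simp [Walk.edges]
          · rw [hc2def]
            simp only [Walk.edges_cons, Walk.edges_nil, List.mem_cons, List.not_mem_nil,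
              or_false]
            right; right
            rw [Sym2.eq_swap]
          · intro z
            have hAb0 : A ≠ b 0 := hA1.ne'
            have hAb1 : A ≠ b 1 := hA2.ne
            have n01 : b 0 ≠ b 1 := a01.ne
            have n12 : b 1 ≠ b 2 := a12.ne
            have n23 : b 2 ≠ b 3 := a23.ne
            have n34 : b 3 ≠ b 4 := a34.ne
            have n40 : b 4 ≠ b 0 := hadj40.ne
            rw [hc1def, hc2def]
            simp only [Walk.support_cons, Walk.support_nil, List.mem_cons,
              List.not_mem_nil, or_false]
            constructor
            · rintro ⟨h1, h2⟩
              rcases h2 with rfl | hzA | rfl | rfl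
              · left; rfl
              · -- z = A
                exfalso
                rcases h1 with rfl | rfl | rfl | rfl | rfl | rfl
                · exact hAb0 hzA.symm
                · exact hAb1 hzA.symm
                · exact hA2eq hzA.symm
                · exact hA3eq hzA.symm
                · exact hA4eq hzA.symm
                · exact hAb0 hzA.symm
              · right; rfl
              · left; rfl
            · rintro (rfl | rfl)
              · exact ⟨Or.inl rfl, Or.inl rfl⟩
              · exact ⟨Or.inr (Or.inl rfl), Or.inr (Or.inr (Or.inl rfl))⟩
end

section
/- Let G be a connected plane graph with minimum degree at least 3 that contains no cycle of length 4, no cycle of length 7, no cycle of length 9, and no 5-cycle normally adjacent to a 3-cycle. Then no 3-face of G is adjacent to a 6-face of G. -/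
open SimpleGraph


namespace Stmt17aux

open SimpleGraph Paper

variable {V : Type*} [Fintype V] {G : SimpleGraph V} [DecidableRel G.Adj]
variable (E : Paper.PlaneEmbedding G)

omit [Fintype V] [DecidableRel G.Adj] in
lemma facePerm_eq_rot_symm (d : G.Dart) : E.facePerm d = E.rot d.symm := rfl

omit [Fintype V] [DecidableRel G.Adj] in
lemma facePerm_fst (d : G.Dart) : (E.facePerm d).fst = d.snd := by
  rw [facePerm_eq_rot_symm, E.fst_rot]; rfl

lemma rot_fix_contra (hmin : ∀ v : V, 3 ≤ G.degree v) {a b : G.Dart}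
    (hab : E.rot a = b) (hba : E.rot b = a) : False := by
  classical
  have hsub : ¬ (G.neighborFinset a.fst ⊆ {a.snd, b.snd}) := by
    intro hs
    have h1 := Finset.card_le_card hs
    have h2 : ({a.snd, b.snd} : Finset V).card ≤ 2 :=
      (Finset.card_insert_le _ _).trans (by simp)
    have h3 := hmin a.fst
    rw [← SimpleGraph.card_neighborFinset_eq_degree] at h3
    omega
  obtain ⟨x, hx, hx2⟩ := Finset.not_subset.1 hsub
  have hadj : G.Adj a.fst x := by rwa [SimpleGraph.mem_neighborFinset] at hx
  have hsc : E.rot.SameCycle a (⟨(a.fst, x), hadj⟩ : G.Dart) :=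
    E.rot_cyclic a _ rfl
  obtain ⟨i, hi, hpow⟩ := hsc.exists_pow_eq'
  have hmem : ∀ k : ℕ, (E.rot ^ k) a = a ∨ (E.rot ^ k) a = b := by
    intro k; induction k with
    | zero => left; rfl
    | succ n ih =>
      rw [pow_succ', Equiv.Perm.mul_apply]
      rcases ih with h | h <;> rw [h]
      · right; exact hab
      · left; exact hba
  rcases hmem i with h | h <;> rw [hpow] at h <;>
    simp only [Finset.mem_insert, Finset.mem_singleton, not_or] at hx2
  · exact hx2.1 (by rw [← h])
  · exact hx2.2 (by rw [← h])

lemma backtrack_contra (hmin : ∀ v : V, 3 ≤ G.degree v) {a : G.Dart}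
    (h : E.facePerm a = a.symm) : False := by
  rw [facePerm_eq_rot_symm] at h
  exact rot_fix_contra E hmin h h

lemma face_orbit (d : G.Dart) (n : ℕ) (h2 : 2 ≤ n) (hn : Paper.faceSize E d = n) :
    (E.facePerm ^ n) d = d ∧
      ∀ i j : ℕ, i < j → j < n → (E.facePerm ^ i) d ≠ (E.facePerm ^ j) d := by
  classical
  by_cases hfix : E.facePerm d = d
  · exfalso
    have hs : Paper.faceOf E d = {d} := by
      ext e
      simp only [Paper.faceOf, Set.mem_setOf_eq, Set.mem_singleton_iff]
      constructor
      · rintro ⟨k, rfl⟩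
        exact (Equiv.Perm.zpow_apply_eq_self_of_apply_eq_self hfix k)
      · rintro rfl; exact Equiv.Perm.SameCycle.refl _ _
    rw [Paper.faceSize, hs, Set.ncard_singleton] at hn; omega
  · have hdsup : d ∈ E.facePerm.support := Equiv.Perm.mem_support.2 hfix
    have hset : Paper.faceOf E d = ↑(E.facePerm.cycleOf d).support := by
      ext e
      rw [Finset.mem_coe, Equiv.Perm.mem_support_cycleOf_iff]
      simp [Paper.faceOf, hdsup]
    have hcard : (E.facePerm.cycleOf d).support.card = n := by
      rw [Paper.faceSize, hset, Set.ncard_coe_finset] at hn; exact hn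
    have hco := Equiv.Perm.isCycleOn_support_cycleOf E.facePerm d
    have hdm : d ∈ (E.facePerm.cycleOf d).support :=
      Equiv.Perm.mem_support_cycleOf_iff.2 ⟨Equiv.Perm.SameCycle.refl _ _, hdsup⟩
    refine ⟨?_, ?_⟩
    · have h := hco.pow_card_apply hdm; rwa [hcard] at h
    · intro i j hij hjn heq
      have h := (hco.pow_apply_eq_pow_apply hdm).1 heq
      rw [hcard] at h
      have hi : i % n = i := Nat.mod_eq_of_lt (hij.trans hjn)
      have hj : j % n = j := Nat.mod_eq_of_lt hjn
      unfold Nat.ModEq at h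
      omega

omit [Fintype V] [DecidableRel G.Adj] in
lemma faceOf_congr {d e : G.Dart} (h : E.facePerm.SameCycle d e) :
    Paper.faceOf E d = Paper.faceOf E e :=
  Set.ext fun _ => ⟨fun hx => h.symm.trans hx, fun hx => h.trans hx⟩

variable {G' : SimpleGraph V}

omit [Fintype V] in
lemma cycle4 (h4 : Paper.NoCycleLen G' 4) {a b c d : V}
    (hab : G'.Adj a b) (hbc : G'.Adj b c) (hcd : G'.Adj c d) (hda : G'.Adj d a)
    (hac : a ≠ c) (hbd : b ≠ d) : False := by
  have hcyc : (Walk.cons hab (Walk.cons hbc (Walk.cons hcd (Walk.cons hda Walk.nil)))).IsCycle := by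
    simp [Walk.isCycle_def, Walk.isTrail_def, Sym2.eq_iff, List.Nodup]
    have := hab.ne; have := hbc.ne; have := hcd.ne; have := hda.ne
    aesop
  exact h4 a _ hcyc (by simp)

omit [Fintype V] in
lemma cycle7 (h7 : Paper.NoCycleLen G' 7) {a b c d e f g : V}
    (h1 : G'.Adj a b) (h2 : G'.Adj b c) (h3 : G'.Adj c d) (h4 : G'.Adj d e)
    (h5 : G'.Adj e f) (h6 : G'.Adj f g) (h7' : G'.Adj g a)
    (hac : a ≠ c) (had : a ≠ d) (hae : a ≠ e) (haf : a ≠ f)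
    (hbd : b ≠ d) (hbe : b ≠ e) (hbf : b ≠ f) (hbg : b ≠ g)
    (hce : c ≠ e) (hcf : c ≠ f) (hcg : c ≠ g)
    (hdf : d ≠ f) (hdg : d ≠ g) (heg : e ≠ g) : False := by
  have hcyc : (Walk.cons h1 (Walk.cons h2 (Walk.cons h3 (Walk.cons h4 (Walk.cons h5 (Walk.cons h6
      (Walk.cons h7' Walk.nil))))))).IsCycle := by
    simp [Walk.isCycle_def, Walk.isTrail_def, Sym2.eq_iff, List.Nodup]
    have := h1.ne; have := h2.ne; have := h3.ne; have := h4.ne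
    have := h5.ne; have := h6.ne; have := h7'.ne
    aesop
  exact h7 a _ hcyc (by simp)

omit [Fintype V] in
lemma fiveThree (h53 : Paper.No5CycleNormAdj3 G') {x y w p q r : V}
    (hxy : G'.Adj x y) (hyw : G'.Adj y w) (hwx : G'.Adj w x)
    (hxp : G'.Adj x p) (hpq : G'.Adj p q) (hqr : G'.Adj q r) (hry : G'.Adj r y)
    (hxq : x ≠ q) (hxr : x ≠ r) (hpr : p ≠ r) (hpy : p ≠ y) (hqy : q ≠ y)
    (hwp : w ≠ p) (hwq : w ≠ q) (hwr : w ≠ r) : False := by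
  have hxy' := hxy.ne; have hyw' := hyw.ne; have hwx' := hwx.ne
  have hxp' := hxp.ne; have hpq' := hpq.ne; have hqr' := hqr.ne; have hry' := hry.ne
  refine h53 x x
    (Walk.cons hxp (Walk.cons hpq (Walk.cons hqr (Walk.cons hry (Walk.cons hxy.symm Walk.nil)))))
    (Walk.cons hxy (Walk.cons hyw (Walk.cons hwx Walk.nil)))
    ?_ (by simp) ?_ (by simp) ?_
  · simp [Walk.isCycle_def, Walk.isTrail_def, Sym2.eq_iff, List.Nodup]
    aesop
  · simp [Walk.isCycle_def, Walk.isTrail_def, Sym2.eq_iff, List.Nodup]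
    aesop
  · refine ⟨x, y, hxy.ne, by simp [Sym2.eq_iff], by simp, ?_⟩
    intro z
    simp only [Walk.support_cons, Walk.support_nil, List.mem_cons, List.not_mem_nil, or_false,
      List.mem_singleton]
    constructor
    · rintro ⟨h1, h2⟩
      rcases h2 with rfl | rfl | rfl | rfl
      · left; rfl
      · right; rfl
      · rcases h1 with rfl|rfl|rfl|rfl|rfl|rfl <;> simp_all
      · left; rfl
    · rintro (rfl | rfl) <;> simp

end Stmt17aux

/-- No 3-face is adjacent to a 6-face. -/
theorem statement17 {V : Type*} [Fintype V] (G : SimpleGraph V) [DecidableRel G.Adj]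
    (hconn : G.Connected)
    (E : Paper.PlaneEmbedding G) (hE : E.IsPlane)
    (hmin : ∀ v : V, 3 ≤ G.degree v)
    (h4 : Paper.NoCycleLen G 4) (h7 : Paper.NoCycleLen G 7)
    (h9 : Paper.NoCycleLen G 9) (h53 : Paper.No5CycleNormAdj3 G) :
    ∀ d1 d2 : G.Dart, Paper.faceSize E d1 = 3 → Paper.faceSize E d2 = 6 →
      ¬ Paper.FacesAdjacent E d1 d2 := by
  intro d1 d2 hs1 hs2 hadj
  classical
  obtain ⟨g1, g2, hsc1, hsc2, hedge⟩ := hadj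
  have hg1 : Paper.faceSize E g1 = 3 := by
    rw [Paper.faceSize, ← Stmt17aux.faceOf_congr E hsc1]; exact hs1
  have hg2 : Paper.faceSize E g2 = 6 := by
    rw [Paper.faceSize, ← Stmt17aux.faceOf_congr E hsc2]; exact hs2
  have hg12 : g1 = g2.symm := by
    rcases (SimpleGraph.dart_edge_eq_iff g1 g2).1 hedge with h | h
    · rw [h, hg2] at hg1; omega
    · exact h
  have hf2 : Paper.faceSize E g1.symm = 6 := by
    rw [hg12, SimpleGraph.Dart.symm_symm]; exact hg2
  obtain ⟨hp3, hi3⟩ := Stmt17aux.face_orbit E g1 3 (by norm_num) hg1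
  obtain ⟨hp6, hi6⟩ := Stmt17aux.face_orbit E g1.symm 6 (by norm_num) hf2
  set F := E.facePerm with hFdef
  have hpowS : ∀ (n : ℕ) (x : G.Dart), (F ^ (n + 1)) x = F ((F ^ n) x) := by
    intro n x; rw [pow_succ', Equiv.Perm.mul_apply]
  -- triangle darts
  set t1 := F g1 with ht1
  set t2 := F t1 with ht2
  have ht2p : (F ^ 2) g1 = t2 := by rw [hpowS 1, pow_one]
  have hFt2 : F t2 = g1 := by
    have h3 : (F ^ 3) g1 = F (F (F g1)) := by rw [hpowS 2, hpowS 1, pow_one]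
    rw [ht2, ht1, ← h3]; exact hp3
  -- triangle vertices
  set v0 := g1.fst with hv0
  set v1 := g1.snd with hv1
  set v2 := t1.snd with hv2
  have ht1f : t1.fst = v1 := Stmt17aux.facePerm_fst E g1
  have ht2f : t2.fst = v2 := Stmt17aux.facePerm_fst E t1
  have ht2s : t2.snd = v0 := by
    have h := Stmt17aux.facePerm_fst E t2; rw [hFt2] at h; exact h.symm
  have adj01 : G.Adj v0 v1 := g1.adj
  have adj12 : G.Adj v1 v2 := by have := t1.adj; rwa [ht1f] at this
  have adj20 : G.Adj v2 v0 := by have := t2.adj; rwa [ht2f, ht2s] at this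
  have n01 : v0 ≠ v1 := adj01.ne
  have n12 : v1 ≠ v2 := adj12.ne
  have n20 : v2 ≠ v0 := adj20.ne
  -- hexagon darts
  set b0 := g1.symm with hb0
  set b1 := F b0 with hb1
  set b2 := F b1 with hb2
  set b3 := F b2 with hb3
  set b4 := F b3 with hb4
  set b5 := F b4 with hb5
  have hb1p : (F ^ 1) b0 = b1 := by rw [pow_one]
  have hb2p : (F ^ 2) b0 = b2 := by rw [hpowS 1, hb1p]
  have hb3p : (F ^ 3) b0 = b3 := by rw [hpowS 2, hb2p]
  have hb4p : (F ^ 4) b0 = b4 := by rw [hpowS 3, hb3p]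
  have hb5p : (F ^ 5) b0 = b5 := by rw [hpowS 4, hb4p]
  have hFb5 : F b5 = b0 := by
    have h6 : (F ^ 6) b0 = F b5 := by rw [hpowS 5, hb5p]
    rw [← h6]; exact hp6
  -- hexagon vertices
  have hb0f : b0.fst = v1 := rfl
  have hb0s : b0.snd = v0 := rfl
  have hb1f : b1.fst = v0 := by
    have h := Stmt17aux.facePerm_fst E b0; rw [← hb1] at h; rw [h, hb0s]
  set u2 := b2.fst with hu2
  set u3 := b3.fst with hu3
  set u4 := b4.fst with hu4
  set u5 := b5.fst with hu5
  have hb1s : b1.snd = u2 := by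
    have h := Stmt17aux.facePerm_fst E b1; rw [← hb2] at h; exact h.symm
  have hb2s : b2.snd = u3 := by
    have h := Stmt17aux.facePerm_fst E b2; rw [← hb3] at h; exact h.symm
  have hb3s : b3.snd = u4 := by
    have h := Stmt17aux.facePerm_fst E b3; rw [← hb4] at h; exact h.symm
  have hb4s : b4.snd = u5 := by
    have h := Stmt17aux.facePerm_fst E b4; rw [← hb5] at h; exact h.symm
  have hb5s : b5.snd = v1 := by
    have h := Stmt17aux.facePerm_fst E b5; rw [hFb5] at h; rw [← h, hb0f]
  -- hexagon adjacencies
  have a12 : G.Adj v0 u2 := by have := b1.adj; rwa [hb1f, hb1s] at this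
  have a23 : G.Adj u2 u3 := by have := b2.adj; rwa [hb2s] at this
  have a34 : G.Adj u3 u4 := by have := b3.adj; rwa [hb3s] at this
  have a45 : G.Adj u4 u5 := by have := b4.adj; rwa [hb4s] at this
  have a51 : G.Adj u5 v1 := by have := b5.adj; rwa [hb5s] at this
  -- local distinctness at distance 2 (no backtracking)
  have n02 : v1 ≠ u2 := by
    intro h
    refine Stmt17aux.backtrack_contra E hmin (a := b0) ?_
    rw [← hb1]
    exact SimpleGraph.Dart.ext _ _ (Prod.ext
      (by show b1.fst = b0.snd; rw [hb1f, hb0s])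
      (by show b1.snd = b0.fst; rw [hb1s, ← h, hb0f]))
  have n13 : v0 ≠ u3 := by
    intro h
    refine Stmt17aux.backtrack_contra E hmin (a := b1) ?_
    rw [← hb2]
    exact SimpleGraph.Dart.ext _ _ (Prod.ext
      (by show b2.fst = b1.snd; rw [← hu2, hb1s])
      (by show b2.snd = b1.fst; rw [hb2s, ← h, hb1f]))
  have n24 : u2 ≠ u4 := by
    intro h
    refine Stmt17aux.backtrack_contra E hmin (a := b2) ?_
    rw [← hb3]
    exact SimpleGraph.Dart.ext _ _ (Prod.ext
      (by show b3.fst = b2.snd; rw [← hu3, hb2s])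
      (by show b3.snd = b2.fst; rw [hb3s, ← h, hu2]))
  have n35 : u3 ≠ u5 := by
    intro h
    refine Stmt17aux.backtrack_contra E hmin (a := b3) ?_
    rw [← hb4]
    exact SimpleGraph.Dart.ext _ _ (Prod.ext
      (by show b4.fst = b3.snd; rw [← hu4, hb3s])
      (by show b4.snd = b3.fst; rw [hb4s, ← h, hu3]))
  have n40 : u4 ≠ v1 := by
    intro h
    refine Stmt17aux.backtrack_contra E hmin (a := b4) ?_
    rw [← hb5]
    exact SimpleGraph.Dart.ext _ _ (Prod.ext
      (by show b5.fst = b4.snd; rw [← hu5, hb4s])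
      (by show b5.snd = b4.fst; rw [hb5s, ← h, hu4]))
  have n51 : u5 ≠ v0 := by
    intro h
    refine Stmt17aux.backtrack_contra E hmin (a := b5) ?_
    rw [hFb5]
    exact SimpleGraph.Dart.ext _ _ (Prod.ext
      (by show b0.fst = b5.snd; rw [hb0f, hb5s])
      (by show b0.snd = b5.fst; rw [hb0s, ← h, hu5]))
  -- case analysis
  by_cases hc1 : v1 = u3
  · by_cases hv : u2 = v2
    · -- rot transposition at v0
      have hr1 : E.rot g1 = b1 := by
        have : F b0 = E.rot g1 := by
          rw [Stmt17aux.facePerm_eq_rot_symm, hb0, SimpleGraph.Dart.symm_symm]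
        rw [hb1]; exact this.symm
      have hr2 : E.rot b1 = g1 := by
        have hbt : t2.symm = b1 := by
          refine SimpleGraph.Dart.ext _ _ (Prod.ext ?_ ?_)
          · show t2.snd = b1.fst; rw [ht2s, hb1f]
          · show t2.fst = b1.snd; rw [ht2f, hb1s, hv]
        have : F t2 = E.rot t2.symm := Stmt17aux.facePerm_eq_rot_symm E t2
        rw [hbt] at this; rw [← this, hFt2]
      exact Stmt17aux.rot_fix_contra E hmin hr1 hr2
    · -- 4-cycle v2 v0 u2 v1
      have au21 : G.Adj u2 v1 := by have := a23; rwa [← hc1] at this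
      exact Stmt17aux.cycle4 h4 adj20 a12 au21 adj12 (fun h => hv h.symm) n01
  · by_cases hc2 : v0 = u4
    · by_cases hv : u5 = v2
      · -- rot transposition at v2
        have hr1 : E.rot t2 = b5 := by
          have hbt : b4.symm = t2 := by
            refine SimpleGraph.Dart.ext _ _ (Prod.ext ?_ ?_)
            · show b4.snd = t2.fst; rw [hb4s, ht2f, hv]
            · show b4.fst = t2.snd; rw [← hu4, ← hc2, ht2s]
          have : F b4 = E.rot b4.symm := Stmt17aux.facePerm_eq_rot_symm E b4
          rw [hbt] at this; rw [← this, ← hb5]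
        have hr2 : E.rot b5 = t2 := by
          have hbt : t1.symm = b5 := by
            refine SimpleGraph.Dart.ext _ _ (Prod.ext ?_ ?_)
            · show t1.snd = b5.fst; rw [← hv2, ← hv, hu5]
            · show t1.fst = b5.snd; rw [ht1f, hb5s]
          have : F t1 = E.rot t1.symm := Stmt17aux.facePerm_eq_rot_symm E t1
          rw [hbt] at this; rw [← this, ← ht2]
        exact Stmt17aux.rot_fix_contra E hmin hr1 hr2
      · -- 4-cycle v2 v1 u5 v0
        have a15 : G.Adj v1 u5 := a51.symm
        have a50 : G.Adj u5 v0 := by have := a45; rw [← hc2] at this; exact this.symm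
        exact Stmt17aux.cycle4 h4 adj12.symm a15 a50 adj20.symm
          (fun h => hv h.symm) (fun h => n01 h.symm)
    · by_cases hc3 : u2 = u5
      · by_cases hv : u2 = v2
        · -- rot transposition at v1
          have hr1 : E.rot t1 = b0 := by
            have hbt : b5.symm = t1 := by
              refine SimpleGraph.Dart.ext _ _ (Prod.ext ?_ ?_)
              · show b5.snd = t1.fst; rw [hb5s, ht1f]
              · show b5.fst = t1.snd; rw [← hu5, ← hc3, hv, hv2]
            have : F b5 = E.rot b5.symm := Stmt17aux.facePerm_eq_rot_symm E b5
            rw [hbt] at this; rw [← this, hFb5]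
          have hr2 : E.rot b0 = t1 := by
            have : F g1 = E.rot g1.symm := Stmt17aux.facePerm_eq_rot_symm E g1
            rw [← hb0] at this; rw [← this, ← ht1]
          exact Stmt17aux.rot_fix_contra E hmin hr1 hr2
        · -- 4-cycle v2 v0 u2 v1
          have au21 : G.Adj u2 v1 := by have := a51; rwa [← hc3] at this
          exact Stmt17aux.cycle4 h4 adj20 a12 au21 adj12 (fun h => hv h.symm) n01
      · -- all six hexagon vertices distinct
        by_cases hv2c : u2 = v2
        · -- 5-cycle v2 u3 u4 u5 v1 with triangle v2 v1 v0
          refine Stmt17aux.fiveThree h53 (x := v2) (y := v1) (w := v0)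
            (p := u3) (q := u4) (r := u5)
            adj12.symm adj01.symm adj20.symm
            (by rw [← hv2c]; exact a23) a34 a45 a51
            ?_ ?_ n35 (fun h => hc1 h.symm) n40 n13 hc2 (fun h => n51 h.symm)
          · rw [← hv2c]; exact n24
          · rw [← hv2c]; exact hc3
        · by_cases hv3c : u3 = v2
          · -- 4-cycle v1 v0 u2 v2
            have au2v2 : G.Adj u2 v2 := by rw [← hv3c]; exact a23
            exact Stmt17aux.cycle4 h4 adj01.symm a12 au2v2 adj12.symm
              n02 (fun h => n20 h.symm)
          · by_cases hv4c : u4 = v2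
            · -- 4-cycle v0 v2 u5 v1
              have av2u5 : G.Adj v2 u5 := by rw [← hv4c]; exact a45
              exact Stmt17aux.cycle4 h4 adj20.symm av2u5 a51 adj01.symm
                (fun h => n51 h.symm) (fun h => n12 h.symm)
            · by_cases hv5c : u5 = v2
              · -- 5-cycle v0 u2 u3 u4 v2 with triangle v0 v2 v1
                refine Stmt17aux.fiveThree h53 (x := v0) (y := v2) (w := v1)
                  (p := u2) (q := u3) (r := u4)
                  adj20.symm adj12.symm adj01.symm
                  a12 a23 a34 (by rw [← hv5c]; exact a45)
                  n13 hc2 n24 hv2c hv3c n02 hc1 (fun h => n40 h.symm)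
              · -- 7-cycle v0 u2 u3 u4 u5 v1 v2
                exact Stmt17aux.cycle7 h7 a12 a23 a34 a45 a51 adj12 adj20
                  n13 hc2 (fun h => n51 h.symm) n01
                  n24 hc3 (fun h => n02 h.symm) hv2c
                  n35 (fun h => hc1 h.symm) hv3c
                  n40 hv4c hv5c
end
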